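/- The martingale R_m = Σ_{v ∈ V, |v| < m} L_v·C(U^v) converges, as m → ∞, almost surely and in L² to a square-integrable random variable Q with E[Q] = 0. (The distribution of Q is the Quicksort distribution.) -/

import Mathlib

open MeasureTheory ProbabilityTheory Filter Finset
open scoped ENNReal NNReal Topology

noncomputable section

/-- The Quicksort cost function `C(x) = 1 + 2x·ln x + 2(1-x)·ln(1-x)`
(with `Real.log 0 = 0`, encoding the convention `0·ln 0 = 0`). -/
def Cq (x : ℝ) : ℝ := 1 + 2 * x * Real.log x + 2 * (1 - x) * Real.log (1 - x)

/-- Multiplicative path weights on the binary tree `V = {1,2}*` (words over `Bool`,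
where `false` is the letter `1` and `true` is the letter `2`): `Lw U v w` is the
weight `L^v_w` of the path from `v` to `vw`, with `L^v_∅ = 1`,
`L^v_{w1} = L^v_w·U^{vw}` and `L^v_{w2} = L^v_w·(1 − U^{vw})`. -/
def Lw {Ω : Type*} (U : List Bool → Ω → ℝ) : List Bool → List Bool → Ω → ℝ
  | _, [], _ => 1
  | v, b :: w, ω => (if b then 1 - U v ω else U v ω) * Lw U (v ++ [b]) w ω

/-- The partial sums `R^v_m = Σ_{w ∈ V, |w| < m} L^v_w·C(U^{vw})` of the weighted
branching process defining the Quicksort distribution. -/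
def QSsum {Ω : Type*} (U : List Bool → Ω → ℝ) (v : List Bool) (m : ℕ) (ω : Ω) : ℝ :=
  ∑ k ∈ Finset.range m, ∑ w : Fin k → Bool,
    Lw U v (List.ofFn w) ω * Cq (U (v ++ List.ofFn w) ω)

namespace QSaux

def stepf (b : Bool) (x : ℝ) : ℝ := if b then 1 - x else x

def ff (k : ℕ) (w : Fin k → Bool) (u : List Bool) : ℝ → ℝ :=
  if u = List.ofFn w then Cq
  else if (List.ofFn w).take u.length = u then stepf ((List.ofFn w).getD u.length false)
  else fun _ => 1

def TT (k : ℕ) : Finset (List Bool) :=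
  (Finset.range (k+1)).biUnion fun j => (Finset.univ : Finset (Fin j → Bool)).image List.ofFn

lemma mem_TT {k : ℕ} {u : List Bool} (hu : u.length ≤ k) : u ∈ TT k := by
  simp only [TT, Finset.mem_biUnion, Finset.mem_range, Finset.mem_image, Finset.mem_univ,
    true_and]
  exact ⟨u.length, by omega, u.get, List.ofFn_get u⟩

lemma prod_TT {M : Type*} [CommMonoid M] (k : ℕ) (w : Fin k → Bool)
    (G : List Bool → (ℝ → ℝ) → M) (hG : ∀ u, G u (fun _ => 1) = 1) :
    ∏ u ∈ TT k, G u (ff k w u)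
      = (∏ j ∈ Finset.range k, G ((List.ofFn w).take j)
          (stepf ((List.ofFn w).getD j false))) * G (List.ofFn w) Cq := by
  classical
  set l := List.ofFn w with hl
  have hlen : l.length = k := List.length_ofFn (f := w)
  set Pw : Finset (List Bool) := (Finset.range (k+1)).image (fun j => l.take j) with hPw
  have htake : ∀ j, j ≤ k → (l.take j).length = j := by
    intro j hj
    simp [List.length_take, hlen, Nat.min_eq_left hj]
  have hsub : Pw ⊆ TT k := by
    intro u hu
    simp only [hPw, Finset.mem_image, Finset.mem_range] at hu
    obtain ⟨j, hj, rfl⟩ := hu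
    exact mem_TT (by rw [htake j (by omega)]; omega)
  have h1 : ∀ u ∈ TT k, u ∉ Pw → G u (ff k w u) = 1 := by
    intro u _ hu
    have hne : u ≠ l := by
      rintro rfl
      exact hu (Finset.mem_image.2 ⟨k, Finset.mem_range.2 (by omega), by
        rw [← hlen, List.take_length]⟩)
    have hnt : ¬ l.take u.length = u := by
      intro h
      have hul : u.length ≤ k := by
        have := congrArg List.length h
        simp [List.length_take, hlen] at this
        omega
      exact hu (Finset.mem_image.2 ⟨u.length, Finset.mem_range.2 (by omega), h⟩)
    rw [ff, if_neg hne, if_neg hnt]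
    exact hG u
  rw [← Finset.prod_subset hsub h1]
  have hinj : Set.InjOn (fun j => l.take j) (Finset.range (k+1)) := by
    intro a ha b hb hab
    simp only [Finset.coe_range, Set.mem_Iio] at ha hb
    have := congrArg List.length hab
    rwa [htake a (by omega), htake b (by omega)] at this
  rw [hPw, Finset.prod_image (fun a ha b hb => hinj ha hb), Finset.prod_range_succ]
  have h2 : l.take k = l := by rw [← hlen]; exact List.take_length
  congr 1
  · apply Finset.prod_congr rfl
    intro j hj
    have hjk : j < k := Finset.mem_range.mp hj
    have hjl : (l.take j).length = j := htake j hjk.le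
    have hne : l.take j ≠ l := by
      intro h
      have := congrArg List.length h
      rw [hjl, hlen] at this
      omega
    rw [ff, if_neg hne, hjl, if_pos rfl]
  · rw [h2, ff, if_pos rfl]

lemma Lw_eq_prod {Ω : Type*} (U : List Bool → Ω → ℝ) (l v : List Bool) (ω : Ω) :
    Lw U v l ω = ∏ j ∈ Finset.range l.length,
      stepf (l.getD j false) (U (v ++ l.take j) ω) := by
  induction l generalizing v with
  | nil => simp [Lw]
  | cons b t ih =>
    rw [Lw, ih (v ++ [b]), List.length_cons, Finset.prod_range_succ']
    rw [mul_comm]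
    congr 1
    · apply Finset.prod_congr rfl
      intro j _
      simp [List.take_succ_cons, List.append_assoc]
    · simp [stepf]

lemma prod_ff {Ω : Type*} (U : List Bool → Ω → ℝ) (k : ℕ) (w : Fin k → Bool) (ω : Ω) :
    (∏ u ∈ TT k, ff k w u (U u ω))
      = Lw U ([] : List Bool) (List.ofFn w) ω * Cq (U (List.ofFn w) ω) := by
  rw [prod_TT k w (fun u g => g (U u ω)) (fun u => rfl), Lw_eq_prod U (List.ofFn w) ([] : List Bool) ω]
  simp [List.length_ofFn]


def unif : Measure ℝ := volume.restrict (Set.Icc (0:ℝ) 1)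

instance : IsProbabilityMeasure unif :=
  ⟨by simp [unif, Real.volume_Icc]⟩

lemma measurable_Cq : Measurable Cq := by
  unfold Cq
  exact (measurable_const.add ((measurable_id.const_mul 2).mul Real.measurable_log)).add
    (((measurable_const.sub measurable_id).const_mul 2).mul
      (Real.measurable_log.comp (measurable_const.sub measurable_id)))

lemma measurable_stepf (b : Bool) : Measurable (stepf b) := by
  unfold stepf
  cases b <;> simp <;> fun_prop

lemma measurable_ff (k : ℕ) (w : Fin k → Bool) (u : List Bool) : Measurable (ff k w u) := by
  unfold ff
  split_ifs
  · exact measurable_Cq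
  · exact measurable_stepf _
  · exact measurable_const

lemma unif_integral_eq (h : ℝ → ℝ) : ∫ x, h x ∂unif = ∫ x in (0:ℝ)..1, h x := by
  rw [intervalIntegral.integral_of_le zero_le_one]
  show ∫ x in Set.Icc (0:ℝ) 1, h x = _
  rw [integral_Icc_eq_integral_Ioc]

lemma integral_id_mul_log : ∫ x in (0:ℝ)..1, x * Real.log x = -(1/4) := by
  have hF : (fun x : ℝ => x^2/2 * Real.log x - x^2/4)
      = fun x : ℝ => x/2 * (x * Real.log x) - x^2/4 := by
    funext x; ring
  have hcont : ContinuousOn (fun x : ℝ => x^2/2 * Real.log x - x^2/4) (Set.Icc 0 1) := by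
    rw [hF]
    apply Continuous.continuousOn
    fun_prop
  have hderiv : ∀ x ∈ Set.Ioo (0:ℝ) 1,
      HasDerivAt (fun x : ℝ => x^2/2 * Real.log x - x^2/4) (x * Real.log x) x := by
    intro x hx
    have h1 : HasDerivAt (fun x : ℝ => x^2/2 * Real.log x)
        ((2*x/2) * Real.log x + x^2/2 * x⁻¹) x :=
      (((hasDerivAt_pow 2 x).div_const 2).mul (Real.hasDerivAt_log hx.1.ne')).congr_deriv
        (by ring)
    have h2 := h1.sub ((hasDerivAt_pow 2 x).div_const 4)
    have hx0 : x ≠ 0 := ne_of_gt hx.1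
    refine h2.congr_deriv ?_
    field_simp
    ring
  rw [intervalIntegral.integral_eq_sub_of_hasDeriv_right_of_le zero_le_one hcont
    (fun x hx => (hderiv x hx).hasDerivWithinAt)
    (Real.continuous_mul_log.intervalIntegrable 0 1)]
  norm_num

lemma integral_one_sub_mul_log : ∫ x in (0:ℝ)..1, (1-x) * Real.log (1-x) = -(1/4) := by
  have := intervalIntegral.integral_comp_sub_left (a := (0:ℝ)) (b := 1)
    (fun y => y * Real.log y) 1
  simp only [sub_self, sub_zero] at this
  rw [show (fun x : ℝ => (1-x) * Real.log (1-x)) = fun x : ℝ => (fun y => y * Real.log y) (1-x)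
    from rfl]
  rw [this, integral_id_mul_log]

lemma integral_Cq : ∫ x, Cq x ∂unif = 0 := by
  rw [unif_integral_eq]
  have hCq : Cq = fun x : ℝ =>
      1 + (2*(x*Real.log x) + 2*((1-x)*Real.log (1-x))) := by
    funext x; unfold Cq; ring
  have i1 : IntervalIntegrable (fun x : ℝ => x * Real.log x) volume 0 1 :=
    Real.continuous_mul_log.intervalIntegrable 0 1
  have i2 : IntervalIntegrable (fun x : ℝ => (1-x) * Real.log (1-x)) volume 0 1 := by
    apply Continuous.intervalIntegrable
    exact Real.continuous_mul_log.comp (continuous_const.sub continuous_id)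
  rw [hCq]
  rw [intervalIntegral.integral_add intervalIntegrable_const
    (((i1.const_mul 2)).add (i2.const_mul 2)),
    intervalIntegral.integral_add (i1.const_mul 2) (i2.const_mul 2),
    intervalIntegral.integral_const_mul, intervalIntegral.integral_const_mul,
    integral_id_mul_log, integral_one_sub_mul_log]
  norm_num

lemma integral_sq_stepf (b : Bool) : ∫ x, stepf b x * stepf b x ∂unif = 1/3 := by
  rw [unif_integral_eq]
  cases b
  · have : (fun x : ℝ => stepf false x * stepf false x) = fun x : ℝ => x^2 := by
      funext x; simp [stepf]; ring
    rw [this, integral_pow]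
    norm_num
  · have : (fun x : ℝ => stepf true x * stepf true x) = fun x : ℝ => (fun y : ℝ => y^2) (1-x) := by
      funext x; simp [stepf]; ring
    rw [this]
    have := intervalIntegral.integral_comp_sub_left (a := (0:ℝ)) (b := 1) (fun y : ℝ => y^2) 1
    simp only [sub_self, sub_zero] at this
    rw [this, integral_pow]
    norm_num

lemma abs_mul_log_le {x : ℝ} (h0 : 0 ≤ x) (h1 : x ≤ 1) : |x * Real.log x| ≤ 1 := by
  rcases eq_or_lt_of_le h0 with rfl | hx
  · simp
  · have := (Real.abs_log_mul_self_lt x hx h1).le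
    rw [mul_comm]
    exact this

lemma abs_Cq_le {x : ℝ} (hx : x ∈ Set.Icc (0:ℝ) 1) : |Cq x| ≤ 5 := by
  obtain ⟨h0, h1⟩ := hx
  have e1 := abs_le.mp (abs_mul_log_le h0 h1)
  have e2 := abs_le.mp (abs_mul_log_le (by linarith : (0:ℝ) ≤ 1 - x) (by linarith))
  unfold Cq
  rw [abs_le]
  constructor <;> nlinarith [e1.1, e1.2, e2.1, e2.2]

lemma abs_stepf_le {b : Bool} {x : ℝ} (hx : x ∈ Set.Icc (0:ℝ) 1) : |stepf b x| ≤ 5 := by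
  obtain ⟨h0, h1⟩ := hx
  cases b <;> simp [stepf] <;> rw [abs_le] <;> constructor <;> linarith

lemma abs_ff_le (k : ℕ) (w : Fin k → Bool) (u : List Bool) {x : ℝ}
    (hx : x ∈ Set.Icc (0:ℝ) 1) : |ff k w u x| ≤ 5 := by
  unfold ff
  split_ifs
  · exact abs_Cq_le hx
  · exact abs_stepf_le hx
  · norm_num

lemma integral_sq_Cq_le : 0 ≤ (∫ x, Cq x * Cq x ∂unif) ∧ (∫ x, Cq x * Cq x ∂unif) ≤ 25 := by
  have hae : ∀ᵐ x ∂unif, x ∈ Set.Icc (0:ℝ) 1 := ae_restrict_mem measurableSet_Icc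
  have hint : Integrable (fun x => Cq x * Cq x) unif := by
    apply Integrable.mono' (integrable_const (25:ℝ))
      (measurable_Cq.mul measurable_Cq).aestronglyMeasurable
    filter_upwards [hae] with x hx
    rw [Real.norm_eq_abs, Pi.mul_apply, abs_mul]
    nlinarith [abs_Cq_le hx, abs_nonneg (Cq x)]
  constructor
  · exact integral_nonneg fun x => mul_self_nonneg _
  · have h1 : (∫ x, Cq x * Cq x ∂unif) ≤ ∫ _, (25:ℝ) ∂unif := by
      apply integral_mono_ae hint (integrable_const _)
      filter_upwards [hae] with x hx
      nlinarith [abs_Cq_le hx, abs_nonneg (Cq x), neg_abs_le (Cq x), le_abs_self (Cq x)]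
    have h2 : (∫ _, (25:ℝ) ∂unif) = 25 := by
      simp [measure_univ]
    linarith

section Prob
variable {Ω : Type*} [MeasurableSpace Ω] (P : Measure Ω) [IsProbabilityMeasure P]
  (U : List Bool → Ω → ℝ)

lemma ae_mem_Icc (hmeas : ∀ v, Measurable (U v))
    (hunif : ∀ v, Measure.map (U v) P = volume.restrict (Set.Icc (0 : ℝ) 1)) :
    ∀ᵐ ω ∂P, ∀ v : List Bool, U v ω ∈ Set.Icc (0:ℝ) 1 := by
  rw [ae_all_iff]
  intro v
  have h2 : Measure.map (U v) P ((Set.Icc (0:ℝ) 1)ᶜ) = 0 := by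
    rw [hunif v, Measure.restrict_apply measurableSet_Icc.compl]
    simp
  rw [Measure.map_apply (hmeas v) measurableSet_Icc.compl] at h2
  rw [ae_iff]
  exact h2

lemma integral_comp (hmeas : ∀ v, Measurable (U v))
    (hunif : ∀ v, Measure.map (U v) P = volume.restrict (Set.Icc (0 : ℝ) 1))
    (u : List Bool) (h : ℝ → ℝ) (hh : Measurable h) :
    ∫ ω, h (U u ω) ∂P = ∫ x, h x ∂unif := by
  rw [← integral_map (hmeas u).aemeasurable hh.aestronglyMeasurable, hunif u]
  rfl

lemma integral_prod_eq (hmeas : ∀ v, Measurable (U v))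
    (hindep : iIndepFun U P)
    (s : Finset (List Bool)) (h : List Bool → ℝ → ℝ) (hh : ∀ u, Measurable (h u)) :
    ∫ ω, ∏ u ∈ s, h u (U u ω) ∂P = ∏ u ∈ s, ∫ ω, h u (U u ω) ∂P := by
  classical
  have hg : ∀ u, Measurable fun ω => h u (U u ω) := fun u => (hh u).comp (hmeas u)
  have hInd : iIndepFun (fun u => h u ∘ U u) P := hindep.comp h hh
  induction s using Finset.induction_on with
  | empty => simp
  | @insert a s ha ih =>
    have hprodmeas : Measurable (∏ j ∈ s, fun ω => h j (U j ω)) := by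
      rw [show (∏ j ∈ s, fun ω => h j (U j ω)) = fun ω => ∏ j ∈ s, h j (U j ω) from
        funext fun ω => Finset.prod_apply ω s _]
      exact Finset.measurable_prod s fun u _ => hg u
    have hid : IndepFun (∏ j ∈ s, fun ω => h j (U j ω)) (fun ω => h a (U a ω)) P :=
      hInd.indepFun_finset_prod_of_notMem hg ha
    have hstep := hid.integral_mul_eq_mul_integral hprodmeas.aestronglyMeasurable (hg a).aestronglyMeasurable
    have e1 : ∀ ω, ∏ u ∈ insert a s, h u (U u ω) = (∏ u ∈ s, h u (U u ω)) * h a (U a ω) :=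
      fun ω => by rw [Finset.prod_insert ha, mul_comm]
    calc ∫ ω, ∏ u ∈ insert a s, h u (U u ω) ∂P
        = ∫ ω, (∏ u ∈ s, h u (U u ω)) * h a (U a ω) ∂P := by simp only [e1]
      _ = (∫ ω, ∏ u ∈ s, h u (U u ω) ∂P) * ∫ ω, h a (U a ω) ∂P := by
          have hfun : (∏ j ∈ s, fun ω => h j (U j ω)) = fun ω => ∏ u ∈ s, h u (U u ω) :=
            funext fun ω => Finset.prod_apply ω s _
          rw [hfun] at hstep
          exact hstep
      _ = ∏ u ∈ insert a s, ∫ ω, h u (U u ω) ∂P := by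
          rw [ih, Finset.prod_insert ha]
          exact mul_comm _ _

/-- The summand process. -/
def X (k : ℕ) (w : Fin k → Bool) (ω : Ω) : ℝ := ∏ u ∈ TT k, ff k w u (U u ω)

/-- The martingale increments. -/
def Dk (k : ℕ) (ω : Ω) : ℝ := ∑ w : Fin k → Bool, X U k w ω

lemma measurable_X (hmeas : ∀ v, Measurable (U v)) (k : ℕ) (w : Fin k → Bool) :
    Measurable (X U k w) :=
  Finset.measurable_prod _ fun u _ => (measurable_ff k w u).comp (hmeas u)

lemma measurable_Dk (hmeas : ∀ v, Measurable (U v)) (k : ℕ) :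
    Measurable (Dk U k) :=
  Finset.measurable_sum _ fun w _ => measurable_X U hmeas k w

lemma abs_X_le (k : ℕ) (w : Fin k → Bool) {ω : Ω}
    (hω : ∀ v : List Bool, U v ω ∈ Set.Icc (0:ℝ) 1) :
    |X U k w ω| ≤ 5 ^ (TT k).card := by
  rw [X, Finset.abs_prod]
  calc ∏ u ∈ TT k, |ff k w u (U u ω)| ≤ ∏ _u ∈ TT k, (5:ℝ) :=
        Finset.prod_le_prod (fun u _ => abs_nonneg _) fun u _ => abs_ff_le k w u (hω u)
    _ = 5 ^ (TT k).card := by rw [Finset.prod_const]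

lemma integrable_X_mul_X (hmeas : ∀ v, Measurable (U v))
    (hunif : ∀ v, Measure.map (U v) P = volume.restrict (Set.Icc (0 : ℝ) 1))
    (k : ℕ) (w w' : Fin k → Bool) :
    Integrable (fun ω => X U k w ω * X U k w' ω) P := by
  apply Integrable.mono' (integrable_const ((5 ^ (TT k).card : ℝ) * 5 ^ (TT k).card))
    ((measurable_X U hmeas k w).mul (measurable_X U hmeas k w')).aestronglyMeasurable
  filter_upwards [ae_mem_Icc P U hmeas hunif] with ω hω
  rw [Real.norm_eq_abs, Pi.mul_apply, abs_mul]
  have b1 := abs_X_le U k w hω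
  have b2 := abs_X_le U k w' hω
  have n1 := abs_nonneg (X U k w ω)
  have n2 := abs_nonneg (X U k w' ω)
  nlinarith

lemma integral_X_mul_X (hmeas : ∀ v, Measurable (U v))
    (hunif : ∀ v, Measure.map (U v) P = volume.restrict (Set.Icc (0 : ℝ) 1))
    (hindep : iIndepFun U P)
    (k : ℕ) (w w' : Fin k → Bool) :
    ∫ ω, X U k w ω * X U k w' ω ∂P
      = ∏ u ∈ TT k, ∫ x, ff k w u x * ff k w' u x ∂unif := by
  have e1 : ∀ ω, X U k w ω * X U k w' ω
      = ∏ u ∈ TT k, (ff k w u * ff k w' u) (U u ω) := by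
    intro ω
    rw [X, X, ← Finset.prod_mul_distrib]
    rfl
  simp only [e1]
  rw [integral_prod_eq P U hmeas hindep (TT k) (fun u => ff k w u * ff k w' u)
    (fun u => (measurable_ff k w u).mul (measurable_ff k w' u))]
  exact Finset.prod_congr rfl fun u _ =>
    integral_comp P U hmeas hunif u _ ((measurable_ff k w u).mul (measurable_ff k w' u))

lemma integral_X_mul_X_cross (hmeas : ∀ v, Measurable (U v))
    (hunif : ∀ v, Measure.map (U v) P = volume.restrict (Set.Icc (0 : ℝ) 1))
    (hindep : iIndepFun U P)
    (k : ℕ) (w w' : Fin k → Bool) (hww : w ≠ w') :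
    ∫ ω, X U k w ω * X U k w' ω ∂P = 0 := by
  rw [integral_X_mul_X P U hmeas hunif hindep k w w']
  apply Finset.prod_eq_zero (mem_TT (le_of_eq (List.length_ofFn (f := w))))
  have h1 : ff k w (List.ofFn w) = Cq := by rw [ff, if_pos rfl]
  have h2 : ff k w' (List.ofFn w) = fun _ => 1 := by
    have hne : List.ofFn w ≠ List.ofFn w' := by
      simpa [funext_iff] using fun h => hww (funext h)
    rw [ff, if_neg hne, if_neg]
    intro h
    have h3 : (List.ofFn w').take (List.ofFn w).length = List.ofFn w' := by
      have hlen : (List.ofFn w).length = (List.ofFn w').length := by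
        simp [List.length_ofFn]
      rw [hlen, List.take_length]
    exact hne (h3 ▸ h).symm
  rw [h1, h2]
  simpa using integral_Cq

lemma integral_X_sq (hmeas : ∀ v, Measurable (U v))
    (hunif : ∀ v, Measure.map (U v) P = volume.restrict (Set.Icc (0 : ℝ) 1))
    (hindep : iIndepFun U P)
    (k : ℕ) (w : Fin k → Bool) :
    ∫ ω, X U k w ω * X U k w ω ∂P
      = (1/3) ^ k * ∫ x, Cq x * Cq x ∂unif := by
  rw [integral_X_mul_X P U hmeas hunif hindep k w w]
  rw [prod_TT k w (fun _u g => ∫ x, g x * g x ∂unif) (fun u => by simp [measure_univ])]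
  congr 1
  rw [Finset.prod_congr rfl fun j _ => integral_sq_stepf ((List.ofFn w).getD j false)]
  rw [Finset.prod_const, Finset.card_range]

lemma integral_X (hmeas : ∀ v, Measurable (U v))
    (hunif : ∀ v, Measure.map (U v) P = volume.restrict (Set.Icc (0 : ℝ) 1))
    (hindep : iIndepFun U P)
    (k : ℕ) (w : Fin k → Bool) :
    ∫ ω, X U k w ω ∂P = 0 := by
  simp only [X]
  rw [integral_prod_eq P U hmeas hindep (TT k) (fun u => ff k w u)
    (fun u => measurable_ff k w u)]
  apply Finset.prod_eq_zero (mem_TT (le_of_eq (List.length_ofFn (f := w))))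
  rw [show ff k w (List.ofFn w) = Cq from by rw [ff, if_pos rfl],
    integral_comp P U hmeas hunif _ Cq measurable_Cq]
  exact integral_Cq

end Prob


section Prob2
variable {Ω : Type*} [MeasurableSpace Ω] (P : Measure Ω) [IsProbabilityMeasure P]
  (U : List Bool → Ω → ℝ)

lemma integrable_X (hmeas : ∀ v, Measurable (U v))
    (hunif : ∀ v, Measure.map (U v) P = volume.restrict (Set.Icc (0 : ℝ) 1))
    (k : ℕ) (w : Fin k → Bool) : Integrable (X U k w) P := by
  apply Integrable.mono' (integrable_const ((5:ℝ) ^ (TT k).card))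
    (measurable_X U hmeas k w).aestronglyMeasurable
  filter_upwards [ae_mem_Icc P U hmeas hunif] with ω hω
  exact (Real.norm_eq_abs _) ▸ abs_X_le U k w hω

lemma integrable_Dk (hmeas : ∀ v, Measurable (U v))
    (hunif : ∀ v, Measure.map (U v) P = volume.restrict (Set.Icc (0 : ℝ) 1))
    (k : ℕ) : Integrable (Dk U k) P :=
  integrable_finset_sum _ fun w _ => integrable_X P U hmeas hunif k w

lemma integral_Dk (hmeas : ∀ v, Measurable (U v))
    (hunif : ∀ v, Measure.map (U v) P = volume.restrict (Set.Icc (0 : ℝ) 1))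
    (hindep : iIndepFun U P)
    (k : ℕ) : ∫ ω, Dk U k ω ∂P = 0 := by
  simp only [Dk]
  rw [integral_finset_sum _ fun w _ => integrable_X P U hmeas hunif k w]
  exact Finset.sum_eq_zero fun w _ => integral_X P U hmeas hunif hindep k w

lemma integral_Dk_sq_le (hmeas : ∀ v, Measurable (U v))
    (hunif : ∀ v, Measure.map (U v) P = volume.restrict (Set.Icc (0 : ℝ) 1))
    (hindep : iIndepFun U P)
    (k : ℕ) : ∫ ω, Dk U k ω * Dk U k ω ∂P ≤ 25 * (2/3) ^ k := by
  have h1 : ∀ ω, Dk U k ω * Dk U k ω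
      = ∑ w : Fin k → Bool, ∑ w' : Fin k → Bool, X U k w ω * X U k w' ω := by
    intro ω
    rw [Dk, Finset.sum_mul_sum]
  obtain ⟨hc2_0, hc2_25⟩ := integral_sq_Cq_le
  have h2 : ∫ ω, Dk U k ω * Dk U k ω ∂P
      = ∑ w : Fin k → Bool, ∑ w' : Fin k → Bool, ∫ ω, X U k w ω * X U k w' ω ∂P := by
    simp only [h1]
    rw [integral_finset_sum _ fun w _ =>
      integrable_finset_sum _ fun w' _ => integrable_X_mul_X P U hmeas hunif k w w']
    exact Finset.sum_congr rfl fun w _ => integral_finset_sum _ fun w' _ =>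
      integrable_X_mul_X P U hmeas hunif k w w'
  have h3 : ∀ w : Fin k → Bool,
      (∑ w' : Fin k → Bool, ∫ ω, X U k w ω * X U k w' ω ∂P)
        = (1/3) ^ k * ∫ x, Cq x * Cq x ∂unif := by
    intro w
    rw [Finset.sum_eq_single_of_mem w (Finset.mem_univ w)
      (fun w' _ hww' => integral_X_mul_X_cross P U hmeas hunif hindep k w w' (Ne.symm hww'))]
    exact integral_X_sq P U hmeas hunif hindep k w
  rw [h2]
  rw [Finset.sum_congr rfl fun w _ => h3 w, Finset.sum_const, Finset.card_univ]
  have hcard : Fintype.card (Fin k → Bool) = 2 ^ k := by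
    simp [Fintype.card_fun]
  rw [hcard, nsmul_eq_mul]
  have hp : ((2:ℝ) ^ k) * (1/3) ^ k = (2/3) ^ k := by
    rw [← mul_pow]
    norm_num
  have hpos : (0:ℝ) ≤ (2/3) ^ k := by positivity
  push_cast
  rw [← mul_assoc, hp]
  nlinarith [mul_le_mul_of_nonneg_left hc2_25 hpos]

lemma enorm_sq_eq (x : ℝ) : ‖x‖ₑ ^ (2:ℝ) = ENNReal.ofReal (x * x) := by
  rw [← ofReal_norm,
    ENNReal.ofReal_rpow_of_nonneg (norm_nonneg x) (by norm_num : (0:ℝ) ≤ 2)]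
  congr 1
  rw [show (2:ℝ) = ((2:ℕ):ℝ) by norm_num, Real.rpow_natCast, Real.norm_eq_abs, sq_abs, sq]

lemma eLpNorm_Dk_le (hmeas : ∀ v, Measurable (U v))
    (hunif : ∀ v, Measure.map (U v) P = volume.restrict (Set.Icc (0 : ℝ) 1))
    (hindep : iIndepFun U P)
    (k : ℕ) :
    eLpNorm (Dk U k) 2 P ≤ ENNReal.ofReal (5 * Real.sqrt (2/3) ^ k) := by
  have hint : Integrable (fun ω => Dk U k ω * Dk U k ω) P := by
    have h1 : (fun ω => Dk U k ω * Dk U k ω)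
        = fun ω => ∑ w : Fin k → Bool, ∑ w' : Fin k → Bool, X U k w ω * X U k w' ω := by
      funext ω
      rw [Dk, Finset.sum_mul_sum]
    rw [h1]
    exact integrable_finset_sum _ fun w _ =>
      integrable_finset_sum _ fun w' _ => integrable_X_mul_X P U hmeas hunif k w w'
  rw [eLpNorm_eq_lintegral_rpow_enorm_toReal (by norm_num) (by norm_num)]
  have ht2 : ((2:ENNReal)).toReal = (2:ℝ) := by norm_num
  rw [ht2]
  have step1 : ∫⁻ ω, ‖Dk U k ω‖ₑ ^ (2:ℝ) ∂P
      = ENNReal.ofReal (∫ ω, Dk U k ω * Dk U k ω ∂P) := by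
    rw [ofReal_integral_eq_lintegral_ofReal hint
      (Filter.Eventually.of_forall fun ω => mul_self_nonneg _)]
    exact lintegral_congr fun ω => enorm_sq_eq _
  rw [step1]
  have step2 : ENNReal.ofReal (∫ ω, Dk U k ω * Dk U k ω ∂P)
      ≤ ENNReal.ofReal (25 * (2/3) ^ k) :=
    ENNReal.ofReal_le_ofReal (integral_Dk_sq_le P U hmeas hunif hindep k)
  calc (ENNReal.ofReal (∫ ω, Dk U k ω * Dk U k ω ∂P)) ^ (1/(2:ℝ))
      ≤ (ENNReal.ofReal (25 * (2/3) ^ k)) ^ (1/(2:ℝ)) := by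
        exact ENNReal.rpow_le_rpow step2 (by norm_num)
    _ = ENNReal.ofReal ((25 * (2/3) ^ k) ^ (1/(2:ℝ))) := by
        rw [← ENNReal.ofReal_rpow_of_nonneg (by positivity) (by norm_num : (0:ℝ) ≤ 1/2)]
    _ = ENNReal.ofReal (5 * Real.sqrt (2/3) ^ k) := by
        congr 1
        rw [← Real.rpow_natCast (Real.sqrt (2/3)) k]
        rw [← Real.sqrt_eq_rpow]
        rw [Real.sqrt_mul (by norm_num : (0:ℝ) ≤ 25)]
        rw [show (25:ℝ) = 5 ^ 2 by norm_num, Real.sqrt_sq (by norm_num : (0:ℝ) ≤ 5)]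
        congr 1
        rw [show ((2:ℝ)/3) ^ k = (Real.sqrt (2/3) ^ k) ^ 2 by
          rw [← pow_mul, mul_comm k 2, pow_mul, Real.sq_sqrt (by norm_num : (0:ℝ) ≤ 2/3)],
          Real.sqrt_sq (pow_nonneg (Real.sqrt_nonneg _) k), Real.rpow_natCast]

end Prob2

end QSaux

set_option maxHeartbeats 1000000 in
/-- The martingale `R_m = Σ_{|v|<m} L_v·C(U^v)` converges, as
`m → ∞`, almost surely and in `L²` to a square-integrable random variable `Q` with
`E[Q] = 0` (the distribution of `Q` is the Quicksort distribution). -/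
theorem quicksort_martingale_convergence {Ω : Type*} [MeasurableSpace Ω] (P : Measure Ω)
    [IsProbabilityMeasure P] (U : List Bool → Ω → ℝ)
    (hmeas : ∀ v, Measurable (U v))
    (hunif : ∀ v, Measure.map (U v) P = volume.restrict (Set.Icc (0 : ℝ) 1))
    (hindep : iIndepFun U P) :
    ∃ Q : Ω → ℝ,
      MeasureTheory.MemLp Q 2 P
      ∧ (∀ᵐ ω ∂P, Filter.Tendsto (fun m => QSsum U ([] : List Bool) m ω)
          Filter.atTop (nhds (Q ω)))
      ∧ Filter.Tendsto (fun m => eLpNorm (fun ω => QSsum U ([] : List Bool) m ω - Q ω) 2 P)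
          Filter.atTop (nhds 0)
      ∧ (∫ ω, Q ω ∂P) = 0 := by
  classical
  set D : ℕ → Ω → ℝ := QSaux.Dk U with hD
  set R : ℕ → Ω → ℝ := fun m ω => ∑ k ∈ Finset.range m, D k ω with hR
  have hQS : ∀ m ω, QSsum U ([] : List Bool) m ω = R m ω := by
    intro m ω
    unfold QSsum
    refine Finset.sum_congr rfl fun k _ => ?_
    refine Finset.sum_congr rfl fun w _ => ?_
    simp only [QSaux.Dk, QSaux.X, List.nil_append]
    exact (QSaux.prod_ff U k w ω).symm
  have hmD : ∀ k, Measurable (D k) := fun k => QSaux.measurable_Dk U hmeas k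
  have hmR : ∀ m, Measurable (R m) := fun m => Finset.measurable_sum _ fun k _ => hmD k
  -- the geometric bound
  set s : ℝ := Real.sqrt (2/3) with hs
  have hs0 : 0 ≤ s := Real.sqrt_nonneg _
  have hs2 : s ^ 2 = 2/3 := Real.sq_sqrt (by norm_num)
  have hs1 : s < 1 := by nlinarith
  set E : ℕ → ℝ≥0∞ := fun k => eLpNorm (D k) 2 P with hE
  have hbound : ∀ k, E k ≤ ENNReal.ofReal (5 * s ^ k) := fun k =>
    QSaux.eLpNorm_Dk_le P U hmeas hunif hindep k
  have hsummable : Summable (fun k => 5 * s ^ k) :=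
    (summable_geometric_of_lt_one hs0 hs1).mul_left 5
  have hEtsum : ∑' k, E k ≠ ⊤ := by
    refine ne_top_of_le_ne_top ?_ (ENNReal.tsum_le_tsum hbound)
    rw [← ENNReal.ofReal_tsum_of_nonneg (fun k => by positivity) hsummable]
    exact ENNReal.ofReal_ne_top
  -- almost sure summability
  have hL12 : ∀ k, eLpNorm (D k) 1 P ≤ E k := fun k =>
    eLpNorm_le_eLpNorm_of_exponent_le (by norm_num) (hmD k).aestronglyMeasurable
  have hlint : ∫⁻ ω, ∑' k, (‖D k ω‖₊ : ℝ≥0∞) ∂P ≠ ⊤ := by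
    rw [lintegral_tsum fun k => (hmD k).nnnorm.coe_nnreal_ennreal.aemeasurable]
    refine ne_top_of_le_ne_top hEtsum (ENNReal.tsum_le_tsum fun k => ?_)
    exact le_trans (le_of_eq (eLpNorm_one_eq_lintegral_enorm (f := D k) (μ := P)).symm) (hL12 k)
  have hae_sum : ∀ᵐ ω ∂P, Summable fun k => D k ω := by
    have hmt : Measurable fun ω => ∑' k, (‖D k ω‖₊ : ℝ≥0∞) :=
      Measurable.ennreal_tsum fun k => (hmD k).nnnorm.coe_nnreal_ennreal
    filter_upwards [ae_lt_top hmt hlint] with ω hω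
    exact Summable.of_nnnorm (ENNReal.tsum_coe_ne_top_iff_summable.mp hω.ne)
  set Q : Ω → ℝ := fun ω => ∑' k, D k ω with hQ
  have hQtend : ∀ᵐ ω ∂P, Tendsto (fun m => R m ω) atTop (𝓝 (Q ω)) := by
    filter_upwards [hae_sum] with ω hω
    exact hω.hasSum.tendsto_sum_nat
  have hQaesm : AEStronglyMeasurable Q P :=
    (aemeasurable_of_tendsto_metrizable_ae atTop (fun m => (hmR m).aemeasurable)
      hQtend).aestronglyMeasurable
  -- finite-sum eLpNorm bounds
  have hfin : ∀ m n, eLpNorm (fun ω => R m ω - R (m + n) ω) 2 P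
      ≤ ∑' k, E (k + m) := by
    intro m n
    have e1 : (fun ω => R m ω - R (m + n) ω)
        = -(fun ω => ∑ j ∈ Finset.range n, D (j + m) ω) := by
      funext ω
      have hsplit : ∑ k ∈ Finset.range (m+n), D k ω
          = (∑ k ∈ Finset.range m, D k ω) + ∑ j ∈ Finset.range n, D (j + m) ω := by
        rw [Finset.range_eq_Ico,
          ← Finset.sum_Ico_consecutive (fun k => D k ω) (Nat.zero_le m)
            (Nat.le_add_right m n)]
        congr 1
        · rw [Finset.range_eq_Ico]
        rw [Finset.sum_Ico_eq_sum_range]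
        simp only [Nat.add_sub_cancel_left]
        exact Finset.sum_congr rfl fun j _ => by rw [add_comm]
      show (∑ k ∈ Finset.range m, D k ω) - ∑ k ∈ Finset.range (m+n), D k ω
          = -(∑ j ∈ Finset.range n, D (j + m) ω)
      rw [hsplit]
      ring
    rw [e1, eLpNorm_neg]
    have hfs : (fun ω => ∑ j ∈ Finset.range n, D (j + m) ω)
        = ∑ j ∈ Finset.range n, (fun ω => D (j + m) ω) := by
      funext ω
      rw [Finset.sum_apply]
    show eLpNorm (fun ω => ∑ j ∈ Finset.range n, D (j + m) ω) 2 P ≤ _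
    rw [hfs]
    refine le_trans (eLpNorm_sum_le
      (fun j _ => (hmD (j + m)).aestronglyMeasurable) (by norm_num)) ?_
    exact ENNReal.sum_le_tsum (Finset.range n)
  have htailto : Tendsto (fun m => ∑' k, E (k + m)) atTop (𝓝 0) :=
    ENNReal.tendsto_sum_nat_add E hEtsum
  have htail : ∀ m, eLpNorm (fun ω => R m ω - Q ω) 2 P ≤ ∑' k, E (k + m) := by
    intro m
    refine le_trans (MeasureTheory.Lp.eLpNorm_lim_le_liminf_eLpNorm
      (f := fun n ω => R m ω - R (m + n) ω)
      (fun n => ((hmR m).sub (hmR (m + n))).aestronglyMeasurable)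
      (fun ω => R m ω - Q ω) ?_) ?_
    · filter_upwards [hQtend] with ω hω
      have hmn : Tendsto (fun n => m + n) atTop atTop :=
        (tendsto_add_atTop_nat m).congr fun n => add_comm n m
      exact tendsto_const_nhds.sub (hω.comp hmn)
    · refine le_trans (Filter.liminf_le_liminf (Filter.Eventually.of_forall
        fun n => hfin m n)) ?_
      rw [Filter.liminf_const]
  -- Memℒp
  have hQlp : MemLp Q 2 P := by
    refine ⟨hQaesm, ?_⟩
    have h0 : eLpNorm Q 2 P ≤ ∑' k, E (k + 0) := by
      have h := htail 0
      have hz : (fun ω => R 0 ω - Q ω) = -Q := by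
        funext ω
        show R 0 ω - Q ω = -(Q ω)
        simp [hR]
      rw [hz, eLpNorm_neg] at h
      exact h
    refine lt_of_le_of_lt h0 (lt_of_le_of_lt ?_ (lt_top_iff_ne_top.mpr hEtsum))
    exact ENNReal.tsum_comp_le_tsum_of_injective (add_left_injective 0) E
  -- L² convergence
  have hL2 : Tendsto (fun m => eLpNorm (fun ω => R m ω - Q ω) 2 P) atTop (𝓝 0) := by
    refine tendsto_of_tendsto_of_tendsto_of_le_of_le tendsto_const_nhds htailto
      (fun m => bot_le) htail
  -- integral of Q
  have hQint : Integrable Q P := hQlp.integrable (by norm_num)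
  have hRint : ∀ m, Integrable (R m) P :=
    fun m => integrable_finset_sum _ fun k _ => QSaux.integrable_Dk P U hmeas hunif k
  have hIR : ∀ m, ∫ ω, R m ω ∂P = 0 := by
    intro m
    rw [hR]
    rw [integral_finset_sum _ fun k _ => QSaux.integrable_Dk P U hmeas hunif k]
    exact Finset.sum_eq_zero fun k _ => QSaux.integral_Dk P U hmeas hunif hindep k
  have hIQ : (∫ ω, Q ω ∂P) = 0 := by
    have hnorm : ∀ m, ‖∫ ω, (R m ω - Q ω) ∂P‖ ≤ (eLpNorm (fun ω => R m ω - Q ω) 2 P).toReal := by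
      intro m
      have h1 := norm_integral_le_lintegral_norm (fun ω => R m ω - Q ω) (μ := P)
      have h2 : (∫⁻ ω, ENNReal.ofReal ‖R m ω - Q ω‖ ∂P)
          = eLpNorm (fun ω => R m ω - Q ω) 1 P := by
        rw [eLpNorm_one_eq_lintegral_enorm]
        exact lintegral_congr fun ω => ofReal_norm _
      have h3 : eLpNorm (fun ω => R m ω - Q ω) 1 P ≤ eLpNorm (fun ω => R m ω - Q ω) 2 P :=
        eLpNorm_le_eLpNorm_of_exponent_le (by norm_num)
          ((hmR m).aestronglyMeasurable.sub hQaesm)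
      refine le_trans h1 ?_
      rw [h2]
      refine ENNReal.toReal_mono ?_ h3
      exact (lt_of_le_of_lt (htail m) (lt_of_le_of_lt
        (ENNReal.tsum_comp_le_tsum_of_injective (add_left_injective m) E)
        (lt_top_iff_ne_top.mpr hEtsum))).ne
    have htR : Tendsto (fun m => (eLpNorm (fun ω => R m ω - Q ω) 2 P).toReal) atTop (𝓝 0) := by
      have := (ENNReal.tendsto_toReal (ENNReal.zero_ne_top)).comp hL2
      simpa [Function.comp_def] using this
    have hto : Tendsto (fun m => ∫ ω, (R m ω - Q ω) ∂P) atTop (𝓝 0) :=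
      squeeze_zero_norm hnorm htR
    have heq : ∀ m, ∫ ω, (R m ω - Q ω) ∂P = -∫ ω, Q ω ∂P := by
      intro m
      rw [integral_sub (hRint m) hQint, hIR m]
      ring
    rw [show (fun m => ∫ ω, (R m ω - Q ω) ∂P) = fun _ => -∫ ω, Q ω ∂P from funext heq] at hto
    have := tendsto_nhds_unique hto tendsto_const_nhds
    linarith
  refine ⟨Q, hQlp, ?_, ?_, hIQ⟩
  · filter_upwards [hQtend] with ω hω
    simpa [hQS] using hω
  · simp only [hQS]
    exact hL2


end
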